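/- Let (α, μ) be a measurable space with a finite measure μ and let f : α → α be a measurable map preserving μ (i.e. μ(f^{-1}(S)) = μ(S) for every measurable S). Let Λ and B be disjoint measurable subsets of α. For x ∈ α let τ_Λ(x) = inf{k ≥ 1 : f^k(x) ∈ Λ} ∈ ℕ ∪ {∞} (with inf ∅ = ∞) and define τ_B analogously. Let Λ̂ = {x : τ_Λ(x) ≤ τ_B(x)}, Λ_l = Λ̂ \ B and Λ_r = Λ̂ ∩ B. Then f^{-1}(Λ_l ∪ Λ) = Λ_l ∪ Λ_r, and if moreover Λ_l ∩ Λ = ∅, then μ(Λ) = μ(Λ_r). -/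

import Mathlib

open MeasureTheory

/-- The first hitting time (at time `≥ 1`) of a set `S` under iteration of `f`,
with value `∞` (i.e. `⊤` in `ℕ∞`) if the forward orbit never enters `S`. -/
noncomputable def hittingTime {α : Type*} (f : α → α) (S : Set α) (x : α) : ℕ∞ :=
  sInf {n : ℕ∞ | ∃ k : ℕ, n = (k : ℕ∞) ∧ 1 ≤ k ∧ f^[k] x ∈ S}

section Aux

variable {α : Type*} (f : α → α) (S : Set α)

lemma hittingTime_one_le (x : α) : 1 ≤ hittingTime f S x := by
  refine le_sInf ?_
  rintro n ⟨k, rfl, hk, -⟩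
  exact_mod_cast hk

lemma hittingTime_le_coe_iff (x : α) (n : ℕ) :
    hittingTime f S x ≤ (n : ℕ∞) ↔ ∃ k, 1 ≤ k ∧ k ≤ n ∧ f^[k] x ∈ S := by
  constructor
  · intro h
    by_contra hc
    push_neg at hc
    have hge : ((n + 1 : ℕ) : ℕ∞) ≤ hittingTime f S x := by
      refine le_sInf ?_
      rintro m ⟨k, rfl, hk1, hkS⟩
      have hnk : n + 1 ≤ k := by
        by_contra h'
        exact hc k hk1 (by omega) hkS
      exact_mod_cast hnk
    have : ((n + 1 : ℕ) : ℕ∞) ≤ (n : ℕ∞) := hge.trans h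
    have : n + 1 ≤ n := by exact_mod_cast this
    omega
  · rintro ⟨k, hk1, hkn, hkS⟩
    calc hittingTime f S x ≤ (k : ℕ∞) := sInf_le ⟨k, rfl, hk1, hkS⟩
      _ ≤ (n : ℕ∞) := by exact_mod_cast hkn

lemma hittingTime_eq_one (x : α) (h : f x ∈ S) : hittingTime f S x = 1 :=
  le_antisymm (sInf_le ⟨1, rfl, le_rfl, by simpa⟩) (hittingTime_one_le f S x)

lemma hittingTime_succ (x : α) (h : f x ∉ S) :
    hittingTime f S x = 1 + hittingTime f S (f x) := by
  apply le_antisymm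
  · by_cases htop : hittingTime f S (f x) = ⊤
    · simp [htop]
    · obtain ⟨m, hm⟩ := WithTop.ne_top_iff_exists.mp htop
      rw [← hm]
      have hle : hittingTime f S (f x) ≤ (m : ℕ∞) := hm.ge
      obtain ⟨k, hk1, hkm, hkS⟩ := (hittingTime_le_coe_iff f S (f x) m).mp hle
      have hx : f^[k + 1] x ∈ S := by
        rw [Function.iterate_succ_apply]; exact hkS
      have h1 : hittingTime f S x ≤ ((k + 1 : ℕ) : ℕ∞) :=
        sInf_le ⟨k + 1, rfl, by omega, hx⟩
      calc hittingTime f S x ≤ ((k + 1 : ℕ) : ℕ∞) := h1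
        _ ≤ ((1 + m : ℕ) : ℕ∞) := by exact_mod_cast (by omega : k + 1 ≤ 1 + m)
        _ = 1 + (m : ℕ∞) := by push_cast; ring
  · by_cases htop : hittingTime f S x = ⊤
    · rw [htop]; exact le_top
    · obtain ⟨m, hm⟩ := WithTop.ne_top_iff_exists.mp htop
      rw [← hm]
      have hle : hittingTime f S x ≤ (m : ℕ∞) := hm.ge
      obtain ⟨k, hk1, hkm, hkS⟩ := (hittingTime_le_coe_iff f S x m).mp hle
      have hk2 : 2 ≤ k := by
        rcases Nat.lt_or_ge k 2 with h2 | h2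
        · interval_cases k
          · exact absurd (by simpa using hkS) h
        · exact h2
      have hx : f^[k - 1] (f x) ∈ S := by
        have : f^[(k - 1) + 1] x ∈ S := by
          have : (k - 1) + 1 = k := by omega
          rw [this]; exact hkS
        rwa [Function.iterate_succ_apply] at this
      have h1 : hittingTime f S (f x) ≤ ((k - 1 : ℕ) : ℕ∞) :=
        sInf_le ⟨k - 1, rfl, by omega, hx⟩
      calc 1 + hittingTime f S (f x) ≤ 1 + ((k - 1 : ℕ) : ℕ∞) := by
            exact add_le_add_right h1 1
        _ = ((1 + (k - 1) : ℕ) : ℕ∞) := by push_cast; ring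
        _ ≤ (m : ℕ∞) := by exact_mod_cast (by omega : 1 + (k - 1) ≤ m)

lemma enat_le_iff_forall (a b : ℕ∞) : a ≤ b ↔ ∀ n : ℕ, b ≤ (n : ℕ∞) → a ≤ (n : ℕ∞) := by
  constructor
  · intro h n hn; exact h.trans hn
  · intro h
    induction b using ENat.recTopCoe with
    | top => exact le_top
    | coe m => exact h m le_rfl

end Aux

/-- The hitting-set identity of Section 6 of the paper: for a measure-preserving
map `f` of a finite measure space and disjoint measurable sets `Λ`, `B`, letting
`Λ̂ = {x : τ_Λ(x) ≤ τ_B(x)}`, `Λ_l = Λ̂ \ B`, `Λ_r = Λ̂ ∩ B`, one has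
`f⁻¹(Λ_l ∪ Λ) = Λ_l ∪ Λ_r`, and if moreover `Λ_l ∩ Λ = ∅` then `μ(Λ) = μ(Λ_r)`. -/
theorem hitting_set_identity {α : Type*} [MeasurableSpace α]
    (μ : Measure α) [IsFiniteMeasure μ]
    (f : α → α) (hf : Measurable f)
    (hinv : ∀ S : Set α, MeasurableSet S → μ (f ⁻¹' S) = μ S)
    (Λ B : Set α) (hΛ : MeasurableSet Λ) (hB : MeasurableSet B)
    (hdisj : Disjoint Λ B) :
    f ⁻¹' (({x | hittingTime f Λ x ≤ hittingTime f B x} \ B) ∪ Λ)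
        = ({x | hittingTime f Λ x ≤ hittingTime f B x} \ B)
          ∪ ({x | hittingTime f Λ x ≤ hittingTime f B x} ∩ B) ∧
      (({x | hittingTime f Λ x ≤ hittingTime f B x} \ B) ∩ Λ = ∅ →
        μ Λ = μ ({x | hittingTime f Λ x ≤ hittingTime f B x} ∩ B)) := by
  set T : Set α := {x | hittingTime f Λ x ≤ hittingTime f B x} with hT
  -- the set identity
  have hunion : (T \ B) ∪ (T ∩ B) = T := Set.diff_union_inter T B
  have hkey : f ⁻¹' ((T \ B) ∪ Λ) = (T \ B) ∪ (T ∩ B) := by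
    rw [hunion]
    ext x
    simp only [Set.mem_preimage, Set.mem_union, Set.mem_diff, hT, Set.mem_setOf_eq]
    constructor
    · rintro (⟨hTfx, hBfx⟩ | hΛfx)
      · by_cases hΛfx : f x ∈ Λ
        · rw [hittingTime_eq_one f Λ x hΛfx]
          exact hittingTime_one_le f B x
        · rw [hittingTime_succ f Λ x hΛfx, hittingTime_succ f B x hBfx]
          exact add_le_add_right hTfx 1
      · rw [hittingTime_eq_one f Λ x hΛfx]
        exact hittingTime_one_le f B x
    · intro hle
      by_cases hΛfx : f x ∈ Λ
      · exact Or.inr hΛfx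
      · left
        by_cases hBfx : f x ∈ B
        · exfalso
          rw [hittingTime_succ f Λ x hΛfx, hittingTime_eq_one f B x hBfx] at hle
          have h1 : (1 : ℕ∞) + 1 ≤ 1 + hittingTime f Λ (f x) :=
            add_le_add_right (hittingTime_one_le f Λ (f x)) 1
          have := h1.trans hle
          norm_num at this
        · refine ⟨?_, hBfx⟩
          rw [hittingTime_succ f Λ x hΛfx, hittingTime_succ f B x hBfx] at hle
          exact (WithTop.add_le_add_iff_left (by simp : (1 : ℕ∞) ≠ ⊤)).mp hle
  refine ⟨hkey, ?_⟩
  intro hdisj2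
  -- measurability of T
  have hHit : ∀ (S : Set α), MeasurableSet S → ∀ n : ℕ,
      MeasurableSet {x | ∃ k, 1 ≤ k ∧ k ≤ n ∧ f^[k] x ∈ S} := by
    intro S hS n
    have : {x | ∃ k, 1 ≤ k ∧ k ≤ n ∧ f^[k] x ∈ S}
        = ⋃ k : ℕ, ⋃ (_ : 1 ≤ k ∧ k ≤ n), f^[k] ⁻¹' S := by
      ext x; simp [and_assoc]
    rw [this]
    exact MeasurableSet.iUnion fun k => MeasurableSet.iUnion fun _ =>
      (hf.iterate k) hS
  have hTm : MeasurableSet T := by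
    have : T = ⋂ n : ℕ, ({x | ∃ k, 1 ≤ k ∧ k ≤ n ∧ f^[k] x ∈ B})ᶜ
        ∪ {x | ∃ k, 1 ≤ k ∧ k ≤ n ∧ f^[k] x ∈ Λ} := by
      ext x
      simp only [hT, Set.mem_setOf_eq, Set.mem_iInter, Set.mem_union, Set.mem_compl_iff]
      rw [enat_le_iff_forall]
      constructor
      · intro h n
        rw [← hittingTime_le_coe_iff, ← hittingTime_le_coe_iff]
        rcases Decidable.em (hittingTime f B x ≤ (n : ℕ∞)) with hb | hb
        · exact Or.inr (h n hb)
        · exact Or.inl hb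
      · intro h n hn
        rcases h n with hb | ha
        · exact absurd ((hittingTime_le_coe_iff f B x n).mp hn) hb
        · exact (hittingTime_le_coe_iff f Λ x n).mpr ha
    rw [this]
    exact MeasurableSet.iInter fun n =>
      ((hHit B hB n).compl.union (hHit Λ hΛ n))
  -- measure argument
  have hLm : MeasurableSet (T \ B) := hTm.diff hB
  have hRm : MeasurableSet (T ∩ B) := hTm.inter hB
  have hdisjLΛ : Disjoint (T \ B) Λ := Set.disjoint_iff_inter_eq_empty.mpr hdisj2
  have hdisjLR : Disjoint (T \ B) (T ∩ B) := by
    apply Set.disjoint_left.mpr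
    rintro x ⟨-, hxB⟩ ⟨-, hxB'⟩
    exact hxB hxB'
  have hmeq : μ ((T \ B) ∪ Λ) = μ ((T \ B) ∪ (T ∩ B)) := by
    rw [← hkey, hinv _ (hLm.union hΛ)]
  rw [measure_union hdisjLΛ hΛ, measure_union hdisjLR hRm] at hmeq
  exact (ENNReal.add_right_inj (measure_ne_top μ (T \ B))).mp hmeq
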